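/- For all natural numbers n, m, j such that (n mod 2^j) + m < 2^j, every bit of n + m at position j or higher equals the corresponding bit of n: for all j' ≥ j, testBit (n + m) j' = testBit n j'. Hence when a new task of m samples arrives and no carry propagates to bit j, all local models with indices ≥ j remain unchanged. -/

import Mathlib

theorem high_bits_unchanged (n m j : ℕ) (h : n % 2 ^ j + m < 2 ^ j) :
    ∀ j', j ≤ j' → Nat.testBit (n + m) j' = Nat.testBit n j' := by
  intro j' hj
  have hpos : 0 < 2 ^ j := Nat.pow_pos (by norm_num)
  have hdiv : (n + m) / 2 ^ j = n / 2 ^ j := by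
    conv_lhs => rw [← Nat.div_add_mod n (2 ^ j)]
    rw [Nat.add_assoc, Nat.add_comm, Nat.mul_comm (2 ^ j), Nat.add_mul_div_right _ _ hpos,
      Nat.div_eq_of_lt h, Nat.zero_add]
  have key : (n + m) / 2 ^ j' = n / 2 ^ j' := by
    have : 2 ^ j' = 2 ^ j * 2 ^ (j' - j) := by
      rw [← pow_add]; congr 1; omega
    rw [this, Nat.div_div_eq_div_mul (n+m) (2^j) (2^(j'-j)) |>.symm,
      Nat.div_div_eq_div_mul n (2^j) (2^(j'-j)) |>.symm, hdiv]
  simp [Nat.testBit_eq_decide_div_mod_eq, key]
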